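/- Let z_1, ..., z_n be real numbers, let l : R -> R be a surrogate function (convex, nonnegative, nondecreasing, with l(0) = 1) that is differentiable at 0 with derivative c > 0, let beta > 0, and let k be an integer with 1 <= k <= n. If t in R satisfies sum_{i=1}^n l(beta*(z_i - t)) = k, then t >= (1/k) * (sum of the k largest values among z_1, ..., z_n). In particular, the Pat&Mat surrogate quantile threshold is greater than or equal to the TopMean threshold (the mean of the k = n*tau largest scores), and likewise for their Neyman-Pearson variants. -/

import Mathlib

lemma tangent_line_le (l : ℝ → ℝ) (hl_conv : ConvexOn ℝ Set.univ l)
    (hl_zero : l 0 = 1) (hl_diff : DifferentiableAt ℝ l 0) (y : ℝ) :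
    1 + deriv l 0 * y ≤ l y := by
  rcases lt_trichotomy y 0 with h | h | h
  · have := hl_conv.slope_le_deriv (Set.mem_univ y) (Set.mem_univ 0) h hl_diff
    rw [slope_def_field, div_le_iff₀ (by linarith : (0:ℝ) < 0 - y)] at this
    rw [hl_zero] at this; nlinarith
  · simp [h, hl_zero]
  · have := hl_conv.deriv_le_slope (Set.mem_univ 0) (Set.mem_univ y) h hl_diff
    rw [slope_def_field, le_div_iff₀ (by linarith : (0:ℝ) < y - 0)] at this
    rw [hl_zero] at this; nlinarith

lemma sum_map_affine (a b : ℝ) (m : Multiset ℝ) :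
    (m.map (fun x => a * x + b)).sum = a * m.sum + (Multiset.card m : ℝ) * b := by
  induction m using Multiset.induction with
  | empty => simp
  | cons x s ih => simp [ih]; ring

/-- The sum of the `k` largest elements of a finite multiset of reals
(counted with multiplicity). -/
noncomputable def sumTopK (s : Multiset ℝ) (k : ℕ) : ℝ :=
  ((s.sort (· ≤ ·)).drop (Multiset.card s - k)).sum

/-- any solution `t` of the surrogate-quantile equation
`∑ᵢ l(β(zᵢ - t)) = k` is at least the mean of the `k` largest values among the `zᵢ`. -/
theorem surrogate_quantile_ge_topk_mean {n : ℕ} (z : Fin n → ℝ)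
    (l : ℝ → ℝ) (hl_conv : ConvexOn ℝ Set.univ l) (hl_nonneg : ∀ z, 0 ≤ l z)
    (hl_mono : Monotone l) (hl_zero : l 0 = 1)
    (hl_diff : DifferentiableAt ℝ l 0) (hc : 0 < deriv l 0)
    (β : ℝ) (hβ : 0 < β)
    (k : ℕ) (hk1 : 1 ≤ k) (hkn : k ≤ n)
    (t : ℝ) (ht : ∑ i, l (β * (z i - t)) = (k : ℝ)) :
    (1 / (k : ℝ)) * sumTopK (Multiset.map z Finset.univ.val) k ≤ t := by
  set c := deriv l 0 with hc_def
  set s : Multiset ℝ := Multiset.map z Finset.univ.val with hs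
  set L : List ℝ := s.sort (· ≤ ·) with hL
  set m : Multiset ℝ := (↑(L.drop (Multiset.card s - k)) : Multiset ℝ) with hm
  have hcard_s : Multiset.card s = n := by simp [hs]
  have hLlen : L.length = n := by rw [hL, Multiset.length_sort, hcard_s]
  have hms : m ≤ s := by
    have h1 : List.Subperm (L.drop (Multiset.card s - k)) L :=
      (List.drop_sublist _ _).subperm
    calc m ≤ (L : Multiset ℝ) := Multiset.coe_le.mpr h1
    _ = s := Multiset.sort_eq _ _
  have hcard_m : Multiset.card m = k := by
    rw [hm]; simp [List.length_drop, hLlen, hcard_s, Nat.sub_sub_self hkn]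
  set f : ℝ → ℝ := fun x => l (β * (x - t)) with hf
  -- total sum equals k
  have hsum_s : (s.map f).sum = (k : ℝ) := by
    rw [hs, Multiset.map_map]
    exact ht
  -- the sum over the top-k sub-multiset is at most the total sum, by nonnegativity
  have hsum_m_le : (m.map f).sum ≤ (k : ℝ) := by
    rw [← hsum_s]
    obtain ⟨u, hu⟩ := Multiset.le_iff_exists_add.mp (Multiset.map_le_map (f := f) hms)
    rw [hu, Multiset.sum_add]
    have : 0 ≤ u.sum := Multiset.sum_nonneg (fun x hx => by
      have : x ∈ s.map f := by rw [hu]; exact Multiset.mem_add.mpr (Or.inr hx)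
      obtain ⟨y, _, rfl⟩ := Multiset.mem_map.mp this
      exact hl_nonneg _)
    linarith
  -- tangent-line lower bound over m
  have htan : (m.map (fun x => (c * β) * x + (1 - c * β * t))).sum ≤ (m.map f).sum := by
    apply Multiset.sum_map_le_sum_map
    intro x _
    have := tangent_line_le l hl_conv hl_zero hl_diff (β * (x - t))
    rw [← hc_def] at this
    calc (c * β) * x + (1 - c * β * t) = 1 + c * (β * (x - t)) := by ring
    _ ≤ f x := this
  rw [sum_map_affine, hcard_m] at htan
  have hcβ : 0 < c * β := mul_pos hc hβ
  have hkpos : (0:ℝ) < (k:ℝ) := by exact_mod_cast hk1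
  have hmsum : m.sum ≤ (k:ℝ) * t := by nlinarith [le_trans htan hsum_m_le]
  have hsumTopK : sumTopK s k = m.sum := by
    rw [sumTopK, hm]; simp [Multiset.sum_coe]; rfl
  rw [hsumTopK]
  rw [div_mul_eq_mul_div, one_mul, div_le_iff₀ hkpos]
  linarith
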